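/- arXiv:math/0610096 — 2 statements merged into one kernel-verified Lean document; each statement's English description precedes it below -/
import Mathlib

section
/- For k ∈ ℝ \ {0}, define P_n(x,k) = p_n(tanh x, ik) by the recursion p_0 = 1 and p_n(tanh x, ik) = d/dx [ p_{n−1}(tanh x, ik) ] + (ik − n tanh x) p_{n−1}(tanh x, ik). Then the function e_n(x,k) = (sign k)^n (∏_{j=1}^n 1/(j + i|k|)) P_n(x,k) e^{ikx} satisfies the eigenvalue equation −e_n''(x,k) − n(n+1) sech²(x) e_n(x,k) = k² e_n(x,k) for all x ∈ ℝ. -/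
open Complex

/-- `PT k n x = P_n(x,k) = p_n(tanh x, ik)`, defined by the recursion
`p_0 = 1`, `p_n = d/dx p_{n−1} + (ik − n tanh x) p_{n−1}`. -/
noncomputable def PT (k : ℝ) : ℕ → ℝ → ℂ
  | 0 => fun _ => 1
  | (m + 1) => fun x =>
      deriv (PT k m) x + (Complex.I * (k : ℂ) - ((m : ℂ) + 1) * (Real.tanh x : ℂ)) * PT k m x

/-- The continuum eigenfunction
`e_n(x,k) = (sign k)^n (∏_{j=1}^n 1/(j + i|k|)) P_n(x,k) e^{ikx}`. -/
noncomputable def PTeigen (n : ℕ) (k : ℝ) (x : ℝ) : ℂ :=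
  ((Real.sign k : ℝ) : ℂ) ^ n *
    (∏ j ∈ Finset.range n, (1 : ℂ) / (((j : ℂ) + 1) + Complex.I * (|k| : ℝ))) *
    PT k n x * Complex.exp (Complex.I * (k : ℂ) * (x : ℂ))

noncomputable def scc (x : ℝ) : ℂ := ((1 / Real.cosh x : ℝ) : ℂ)
noncomputable def thc (x : ℝ) : ℂ := ((Real.tanh x : ℝ) : ℂ)

lemma hasDerivAt_tanh (x : ℝ) :
    HasDerivAt Real.tanh ((1 / Real.cosh x) ^ 2) x := by
  have hc : Real.cosh x ≠ 0 := (Real.cosh_pos x).ne'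
  have h := (Real.hasDerivAt_sinh x).div (Real.hasDerivAt_cosh x) hc
  have heq : Real.tanh = fun y => Real.sinh y / Real.cosh y :=
    funext Real.tanh_eq_sinh_div_cosh
  rw [heq]
  refine h.congr_deriv ?_
  rw [show Real.cosh x * Real.cosh x - Real.sinh x * Real.sinh x
      = Real.cosh x ^ 2 - Real.sinh x ^ 2 by ring, Real.cosh_sq_sub_sinh_sq]
  field_simp

lemma hasDerivAt_thc (x : ℝ) : HasDerivAt thc (scc x ^ 2) x := by
  have h := (hasDerivAt_tanh x).ofReal_comp
  have e : ((((1 / Real.cosh x) ^ 2 : ℝ)) : ℂ) = scc x ^ 2 := by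
    simp [scc]
  rw [e] at h
  exact h

lemma hasDerivAt_scc_sq (x : ℝ) :
    HasDerivAt (fun y => scc y ^ 2) (-2 * scc x ^ 2 * thc x) x := by
  have hc : Real.cosh x ≠ 0 := (Real.cosh_pos x).ne'
  have h1 : HasDerivAt (fun y : ℝ => 1 / Real.cosh y)
      (-Real.sinh x / Real.cosh x ^ 2) x := by
    simpa [one_div] using (Real.hasDerivAt_cosh x).fun_inv hc
  have h : HasDerivAt (fun y : ℝ => (1 / Real.cosh y) ^ 2)
      (-2 * (1 / Real.cosh x) ^ 2 * Real.tanh x) x := by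
    have h2 := h1.pow 2
    have e2 : ((2 : ℕ) : ℝ) * (1 / Real.cosh x) ^ (2 - 1) * (-Real.sinh x / Real.cosh x ^ 2)
        = -2 * (1 / Real.cosh x) ^ 2 * Real.tanh x := by
      rw [Real.tanh_eq_sinh_div_cosh]
      norm_num [div_eq_mul_inv]
      ring
    rw [e2] at h2
    exact h2
  have h2 := h.ofReal_comp
  have e : ((((-2) * (1 / Real.cosh x) ^ 2 * Real.tanh x : ℝ)) : ℂ)
      = -2 * scc x ^ 2 * thc x := by
    push_cast [scc, thc]
    ring
  rw [e, show (fun y => ((((1 / Real.cosh y) ^ 2 : ℝ)) : ℂ)) = fun y => scc y ^ 2 from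
    funext fun y => by simp [scc]] at h2
  exact h2

lemma contDiff_thc : ContDiff ℝ (⊤ : ℕ∞) thc := by
  have h : ContDiff ℝ (⊤ : ℕ∞) Real.tanh := by
    have : Real.tanh = fun y => Real.sinh y / Real.cosh y :=
      funext Real.tanh_eq_sinh_div_cosh
    rw [this]
    exact Real.contDiff_sinh.div Real.contDiff_cosh fun y => (Real.cosh_pos y).ne'
  exact Complex.ofRealCLM.contDiff.comp h

lemma contDiff_PT (k : ℝ) (n : ℕ) : ContDiff ℝ (⊤ : ℕ∞) (PT k n) := by
  induction n with
  | zero => exact contDiff_const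
  | succ m ih =>
      have hd : ContDiff ℝ (⊤ : ℕ∞) (deriv (PT k m)) :=
        (contDiff_infty_iff_deriv.mp ih).2
      exact hd.add ((contDiff_const.sub ((contDiff_const.mul contDiff_thc))).mul ih)

/-- The exponential part. -/
noncomputable def E (k : ℝ) (x : ℝ) : ℂ := Complex.exp (Complex.I * (k : ℂ) * (x : ℂ))

lemma hasDerivAt_E (k : ℝ) (x : ℝ) :
    HasDerivAt (E k) (Complex.I * (k : ℂ) * E k x) x := by
  have hre : HasDerivAt (fun y : ℝ => (y : ℂ)) 1 x := by
    simpa using (hasDerivAt_id x).ofReal_comp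
  have h1 := (hre.const_mul (Complex.I * (k : ℂ))).cexp
  refine h1.congr_deriv ?_
  unfold E
  ring

noncomputable def G (k : ℝ) (n : ℕ) (x : ℝ) : ℂ := PT k n x * E k x

lemma contDiff_G (k : ℝ) (n : ℕ) : ContDiff ℝ (⊤ : ℕ∞) (G k n) := by
  refine (contDiff_PT k n).mul ?_
  exact (contDiff_const.mul Complex.ofRealCLM.contDiff).cexp

lemma hasDerivAt_G (k : ℝ) (n : ℕ) (x : ℝ) :
    HasDerivAt (G k n) (deriv (G k n) x) x :=
  ((contDiff_G k n).differentiable (by simp) x).hasDerivAt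

lemma hasDerivAt_derivG (k : ℝ) (n : ℕ) (x : ℝ) :
    HasDerivAt (deriv (G k n)) (deriv (deriv (G k n)) x) x :=
  (((contDiff_infty_iff_deriv.mp (contDiff_G k n)).2).differentiable (by simp) x).hasDerivAt

lemma G_succ (k : ℝ) (n : ℕ) :
    G k (n + 1) = fun x => deriv (G k n) x - ((n : ℂ) + 1) * thc x * G k n x := by
  funext x
  have hP : HasDerivAt (PT k n) (deriv (PT k n) x) x :=
    ((contDiff_PT k n).differentiable (by simp) x).hasDerivAt
  have hG : HasDerivAt (G k n)
      (deriv (PT k n) x * E k x + PT k n x * (Complex.I * (k : ℂ) * E k x)) x :=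
    hP.mul (hasDerivAt_E k x)
  rw [hG.deriv]
  show PT k (n + 1) x * E k x = _
  simp only [PT, thc, G]
  ring

lemma key (k : ℝ) (n : ℕ) (x : ℝ) :
    deriv (deriv (G k n)) x = -(((k : ℂ)) ^ 2 + (n : ℂ) * ((n : ℂ) + 1) * scc x ^ 2) * G k n x := by
  induction n generalizing x with
  | zero =>
      have hG0 : G k 0 = E k := by
        funext y; simp [G, PT]
      rw [hG0]
      have hd1 : deriv (E k) = fun y => Complex.I * (k : ℂ) * E k y :=
        funext fun y => (hasDerivAt_E k y).deriv
      rw [hd1]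
      have h2 : HasDerivAt (fun y => Complex.I * (k : ℂ) * E k y)
          (Complex.I * (k : ℂ) * (Complex.I * (k : ℂ) * E k x)) x :=
        (hasDerivAt_E k x).const_mul _
      rw [h2.deriv]
      have hI : Complex.I ^ 2 = -1 := Complex.I_sq
      push_cast
      linear_combination ((k : ℂ) ^ 2 * E k x) * hI
  | succ n ih =>
      set c : ℂ := (n : ℂ) + 1 with hc
      set K : ℂ := ((k : ℂ)) ^ 2 with hK
      -- first derivative of G (n+1)
      have hd1 : ∀ y, HasDerivAt (G k (n + 1))
          (-(K + c ^ 2 * scc y ^ 2) * G k n y - c * thc y * deriv (G k n) y) y := by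
        intro y
        rw [G_succ]
        have hA : HasDerivAt (fun z => deriv (G k n) z) (deriv (deriv (G k n)) y) y :=
          hasDerivAt_derivG k n y
        have hB : HasDerivAt (fun z => c * thc z * G k n z)
            (c * scc y ^ 2 * G k n y + c * thc y * deriv (G k n) y) y := by
          have := ((hasDerivAt_thc y).const_mul c).fun_mul (hasDerivAt_G k n y)
          convert this using 1
        have h := hA.fun_sub hB
        refine h.congr_deriv ?_
        rw [ih y]
        push_cast [hc, hK]
        ring
      have hD1 : deriv (G k (n + 1))
          = fun y => -(K + c ^ 2 * scc y ^ 2) * G k n y - c * thc y * deriv (G k n) y :=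
        funext fun y => (hd1 y).deriv
      rw [hD1]
      -- second derivative
      have hA : HasDerivAt (fun y => -(K + c ^ 2 * scc y ^ 2) * G k n y)
          (-(c ^ 2 * (-2 * scc x ^ 2 * thc x)) * G k n x
            + -(K + c ^ 2 * scc x ^ 2) * deriv (G k n) x) x := by
        have h1 : HasDerivAt (fun y => -(K + c ^ 2 * scc y ^ 2))
            (-(c ^ 2 * (-2 * scc x ^ 2 * thc x))) x :=
          (((hasDerivAt_scc_sq x).const_mul (c ^ 2)).const_add K).neg
        exact h1.mul (hasDerivAt_G k n x)
      have hB : HasDerivAt (fun y => c * thc y * deriv (G k n) y)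
          (c * scc x ^ 2 * deriv (G k n) x + c * thc x * deriv (deriv (G k n)) x) x := by
        have := ((hasDerivAt_thc x).const_mul c).fun_mul (hasDerivAt_derivG k n x)
        convert this using 1
      rw [(hA.fun_sub hB).deriv]
      have hGs : G k (n + 1) x = deriv (G k n) x - c * thc x * G k n x := by
        rw [G_succ]
      rw [hGs, ih x]
      push_cast [hc, hK]
      ring

/-- `e_n(·,k)` solves the eigenvalue equation
`−e_n'' − n(n+1) sech²(x) e_n = k² e_n` for the Pöschl–Teller potential. -/
theorem stmt6 (n : ℕ) (k : ℝ) (hk : k ≠ 0) (x : ℝ) :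
    -(deriv (deriv (PTeigen n k)) x) -
        ((n : ℂ) * ((n : ℂ) + 1)) * ((1 / Real.cosh x : ℝ) : ℂ) ^ 2 * PTeigen n k x =
      ((k : ℂ)) ^ 2 * PTeigen n k x := by
  set C : ℂ := ((Real.sign k : ℝ) : ℂ) ^ n *
    (∏ j ∈ Finset.range n, (1 : ℂ) / (((j : ℂ) + 1) + Complex.I * (|k| : ℝ))) with hC
  have hPe : PTeigen n k = fun y => C * G k n y := by
    funext y
    simp only [PTeigen, G, E, hC]
    ring
  have hd1 : deriv (PTeigen n k) = fun y => C * deriv (G k n) y := by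
    rw [hPe]
    funext y
    exact ((hasDerivAt_G k n y).const_mul C).deriv
  have hd2 : deriv (deriv (PTeigen n k)) x = C * deriv (deriv (G k n)) x := by
    rw [hd1]
    exact ((hasDerivAt_derivG k n x).const_mul C).deriv
  rw [hd2, key k n x, hPe]
  show _ - _ * _ * (C * G k n x) = _ * (C * G k n x)
  have hscc : ((1 / Real.cosh x : ℝ) : ℂ) = scc x := rfl
  rw [hscc]
  ring
end

section
/- Let (I_k) be a countable collection of pairwise disjoint cubes in ℝⁿ, α > 0, and (c_k) nonnegative reals with c_k ≤ α |I_k| for all k. Let μ be a finite positive measure, ρ ∈ L¹(ℝⁿ) nonnegative radially decreasing with ‖ρ‖₁ ≤ 1. Then for every h ∈ L²(ℝⁿ), ∑_k c_k |I_k|^{−1} ∫_{I_k} (ρ_{t_k} * μ * |h|)(z) dz ≤ α μ(ℝⁿ) (∑_k |I_k|)^{1/2} ‖Mh‖_{L²}, where t_k > 0 are arbitrary and M is the Hardy–Littlewood maximal operator. -/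
open MeasureTheory Metric ENNReal

/-- An axis-parallel cube in `ℝⁿ` with corner `a` and side length `r`. -/
def cube {n : ℕ} (a : EuclideanSpace ℝ (Fin n)) (r : ℝ) : Set (EuclideanSpace ℝ (Fin n)) :=
  {y | ∀ i, a i ≤ y i ∧ y i ≤ a i + r}

/-- The Hardy–Littlewood maximal function, with values in `ℝ≥0∞`. -/
noncomputable def maximalFn {n : ℕ} (h : EuclideanSpace ℝ (Fin n) → ℂ)
    (x : EuclideanSpace ℝ (Fin n)) : ℝ≥0∞ :=
  ⨆ (r : ℝ) (_ : 0 < r), (volume (ball x r))⁻¹ * ∫⁻ y in ball x r, ((‖h y‖₊ : ℝ≥0∞))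




variable {n : ℕ}

lemma cube_eq (a : EuclideanSpace ℝ (Fin n)) (r : ℝ) :
    cube a r = (MeasurableEquiv.toLp 2 (Fin n → ℝ)).symm ⁻¹' (Set.univ.pi fun i => Set.Icc (a i) (a i + r)) := by
  ext y
  simp only [cube, Set.mem_preimage, Set.mem_univ_pi, Set.mem_Icc, Set.mem_setOf_eq]
  rfl

lemma measurableSet_cube (a : EuclideanSpace ℝ (Fin n)) (r : ℝ) : MeasurableSet (cube a r) := by
  rw [cube_eq]
  exact (MeasurableEquiv.measurable _) (MeasurableSet.univ_pi fun i => measurableSet_Icc)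

lemma volume_cube (a : EuclideanSpace ℝ (Fin n)) {r : ℝ} (hr : 0 ≤ r) :
    volume (cube a r) = ENNReal.ofReal r ^ n := by
  rw [cube_eq, ((EuclideanSpace.volume_preserving_symm_measurableEquiv_toLp (Fin n)).measure_preimage
    ((MeasurableSet.univ_pi fun i => measurableSet_Icc).nullMeasurableSet)),
    volume_pi_pi]
  simp [Real.volume_Icc]


section radial

variable (ρ : EuclideanSpace ℝ (Fin n) → ℝ) (ρ₀ : ℝ → ℝ)
    (hradial : ∀ x, ρ x = ρ₀ ‖x‖)
    (hnonneg : ∀ s : ℝ, 0 ≤ s → 0 ≤ ρ₀ s)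
    (hdecr : ∀ s u : ℝ, 0 ≤ s → s ≤ u → ρ₀ u ≤ ρ₀ s)

include hradial hdecr in
lemma measurable_rho : Measurable ρ := by
  have : ρ = (fun s : ℝ => ρ₀ (max s 0)) ∘ norm := by
    ext x; simp [hradial x, max_eq_left (norm_nonneg x)]
  rw [this]
  have hq : Antitone (fun s : ℝ => ρ₀ (max s 0)) := fun s u hsu =>
    hdecr _ _ (le_max_right _ _) (max_le_max hsu le_rfl)
  exact hq.measurable.comp measurable_norm

include hradial hnonneg in
lemma rho_nonneg : ∀ x, 0 ≤ ρ x := fun x => (hradial x) ▸ hnonneg _ (norm_nonneg x)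

-- scaled kernel integral
include hradial hnonneg in
lemma lintegral_rho_scaled (hρint : Integrable ρ) (hρ1 : ∫ x, ρ x ≤ 1)
    {τ : ℝ} (hτ : 0 < τ) :
    ∫⁻ y : EuclideanSpace ℝ (Fin n), ENNReal.ofReal ((τ ^ n)⁻¹ * ρ (τ⁻¹ • y)) ≤ 1 := by
  have hint : Integrable (fun y : EuclideanSpace ℝ (Fin n) => (τ ^ n)⁻¹ * ρ (τ⁻¹ • y)) := by
    exact ((hρint.comp_smul (inv_ne_zero hτ.ne')).const_mul _)
  have hnn : 0 ≤ᵐ[volume] fun y : EuclideanSpace ℝ (Fin n) => (τ ^ n)⁻¹ * ρ (τ⁻¹ • y) :=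
    Filter.Eventually.of_forall fun y => mul_nonneg (by positivity) (rho_nonneg ρ ρ₀ hradial hnonneg _)
  rw [← MeasureTheory.ofReal_integral_eq_lintegral_ofReal hint hnn]
  have : ∫ y : EuclideanSpace ℝ (Fin n), (τ ^ n)⁻¹ * ρ (τ⁻¹ • y) =
      (τ ^ n)⁻¹ * ((τ⁻¹ ^ (Module.finrank ℝ (EuclideanSpace ℝ (Fin n))))⁻¹ • ∫ x, ρ x) := by
    rw [integral_const_mul, MeasureTheory.Measure.integral_comp_smul_of_nonneg volume ρ τ⁻¹]
    positivity
  rw [this]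
  simp only [finrank_euclideanSpace_fin, smul_eq_mul, inv_pow, inv_inv]
  rw [← mul_assoc, inv_mul_cancel₀ (by positivity)]
  rw [one_mul]
  exact ENNReal.ofReal_le_one.mpr hρ1



lemma lint_ball_le_maximal (h : EuclideanSpace ℝ (Fin n) → ℂ) (w : EuclideanSpace ℝ (Fin n))
    {R : ℝ} (hR : 0 < R) :
    ∫⁻ y in ball w R, ((‖h y‖₊ : ℝ≥0∞)) ≤ volume (ball w R) * maximalFn h w := by
  have h1 : (volume (ball w R))⁻¹ * ∫⁻ y in ball w R, ((‖h y‖₊ : ℝ≥0∞)) ≤ maximalFn h w := by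
    exact le_iSup₂ (f := fun (r : ℝ) (_ : 0 < r) =>
      (volume (ball w r))⁻¹ * ∫⁻ y in ball w r, ((‖h y‖₊ : ℝ≥0∞))) R hR
  have hne : volume (ball w R) ≠ 0 := (measure_ball_pos volume w hR).ne'
  have hnt : volume (ball w R) ≠ ⊤ := measure_ball_lt_top.ne
  calc ∫⁻ y in ball w R, ((‖h y‖₊ : ℝ≥0∞))
      = volume (ball w R) * ((volume (ball w R))⁻¹ * ∫⁻ y in ball w R, ((‖h y‖₊ : ℝ≥0∞))) := by
        rw [← mul_assoc, ENNReal.mul_inv_cancel hne hnt, one_mul]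
    _ ≤ volume (ball w R) * maximalFn h w := mul_le_mul_right h1 _

lemma setLIntegral_sub_left (G : EuclideanSpace ℝ (Fin n) → ℝ≥0∞) (w : EuclideanSpace ℝ (Fin n))
    (S : Set (EuclideanSpace ℝ (Fin n))) :
    ∫⁻ y in S, G (w - y) = ∫⁻ x in (fun y => w - y) '' S, G x := by
  exact MeasurePreserving.setLIntegral_comp_emb (Measure.measurePreserving_sub_left volume w)
    (MeasurableEquiv.subLeft w).measurableEmbedding G S

lemma setLIntegral_radial_le (hn : 0 < n) (h : EuclideanSpace ℝ (Fin n) → ℂ)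
    (w : EuclideanSpace ℝ (Fin n)) {A : Set (EuclideanSpace ℝ (Fin n))}
    (hrad : ∀ y' y : EuclideanSpace ℝ (Fin n), ‖y'‖ ≤ ‖y‖ → y ∈ A → y' ∈ A) :
    ∫⁻ y in A, ((‖h (w - y)‖₊ : ℝ≥0∞)) ≤ volume A * maximalFn h w := by
  haveI : Nonempty (Fin n) := ⟨⟨0, hn⟩⟩
  haveI : Nontrivial (EuclideanSpace ℝ (Fin n)) := by infer_instance
  set G : EuclideanSpace ℝ (Fin n) → ℝ≥0∞ := fun v => ((‖h v‖₊ : ℝ≥0∞)) with hG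
  rcases A.eq_empty_or_nonempty with rfl | hAne
  · simp
  by_cases hbdd : BddAbove (norm '' A)
  · -- bounded case
    set R := sSup (norm '' A) with hRdef
    have hRnn : 0 ≤ R := by
      obtain ⟨y, hy⟩ := hAne
      exact le_trans (norm_nonneg y) (le_csSup hbdd ⟨y, hy, rfl⟩)
    have hsub : A ⊆ closedBall 0 R := by
      intro y hy
      simp only [mem_closedBall, dist_zero_right]
      exact le_csSup hbdd ⟨y, hy, rfl⟩
    rcases eq_or_lt_of_le hRnn with hR0 | hRpos
    · -- R = 0 : A is contained in {0}, null
      have : volume A = 0 := by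
        have : A ⊆ {0} := by
          intro y hy
          have := hsub hy
          simp only [mem_closedBall, dist_zero_right, ← hR0] at this
          simpa using le_antisymm this (norm_nonneg y)
        exact measure_mono_null this (measure_singleton 0)
      rw [setLIntegral_measure_zero _ _ this]
      exact zero_le
    · -- R > 0
      have hball : ball 0 R ⊆ A := by
        intro y' hy'
        simp only [mem_ball, dist_zero_right] at hy'
        obtain ⟨u, ⟨y, hyA, rfl⟩, hlt⟩ := exists_lt_of_lt_csSup (hAne.image norm) hy'
        exact hrad y' y hlt.le hyA
      have h1 : ∫⁻ y in A, G (w - y) ≤ ∫⁻ y in closedBall 0 R, G (w - y) :=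
        lintegral_mono_set hsub
      have h2 : ∫⁻ y in closedBall 0 R, G (w - y) = ∫⁻ y in ball 0 R, G (w - y) := by
        apply setLIntegral_congr
        rw [MeasureTheory.ae_eq_set]
        constructor
        · rw [closedBall_diff_ball]
          exact Measure.addHaar_sphere volume 0 R
        · rw [Set.diff_eq_empty.mpr ball_subset_closedBall]
          exact measure_empty
      have h3 : ∫⁻ y in ball 0 R, G (w - y) = ∫⁻ x in ball w R, G x := by
        have himg : (fun y : EuclideanSpace ℝ (Fin n) => w - y) '' ball 0 R = ball w R := by
          ext x
          simp only [Set.mem_image, mem_ball, dist_zero_right, dist_eq_norm]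
          constructor
          · rintro ⟨y, hy, rfl⟩
            simpa [norm_sub_rev] using hy
          · intro hx
            exact ⟨w - x, by simpa [norm_sub_rev] using hx, sub_sub_cancel w x⟩
        rw [setLIntegral_sub_left, himg]
      calc ∫⁻ y in A, G (w - y) ≤ ∫⁻ x in ball w R, G x := by rw [← h3, ← h2]; exact h1
        _ ≤ volume (ball w R) * maximalFn h w := lint_ball_le_maximal h w hRpos
        _ ≤ volume A * maximalFn h w := by
            apply mul_le_mul_left
            rw [Measure.addHaar_ball_center volume w R]
            exact measure_mono hball
  · -- unbounded : A = univ
    have hAuniv : A = Set.univ := by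
      ext y'; simp only [Set.mem_univ, iff_true]
      obtain ⟨u, ⟨y, hyA, rfl⟩, hlt⟩ := not_bddAbove_iff.mp hbdd ‖y'‖
      exact hrad y' y hlt.le hyA
    subst hAuniv
    rw [measure_univ_of_isAddLeftInvariant]
    by_cases hM : maximalFn h w = 0
    · have hball0 : ∀ k : ℕ, ∫⁻ x in ball w (k + 1), G x = 0 := by
        intro k
        have := lint_ball_le_maximal h w (by positivity : (0:ℝ) < (k:ℝ) + 1)
        rw [hM, mul_zero] at this
        exact le_antisymm this zero_le
      have : ∫⁻ y in Set.univ, G (w - y) = ∫⁻ x in Set.univ, G x := by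
        have himg : (fun y : EuclideanSpace ℝ (Fin n) => w - y) '' Set.univ = Set.univ :=
          Set.image_univ_of_surjective fun x => ⟨w - x, sub_sub_cancel w x⟩
        rw [setLIntegral_sub_left, himg]
      rw [this]
      have huniv : (Set.univ : Set (EuclideanSpace ℝ (Fin n))) = ⋃ k : ℕ, ball w (k + 1) := by
        ext x
        simp only [Set.mem_univ, true_iff, Set.mem_iUnion, mem_ball]
        obtain ⟨k, hk⟩ := exists_nat_gt (dist x w)
        exact ⟨k, by push_cast; linarith⟩
      have hz : ∫⁻ x in Set.univ, G x = 0 := by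
        refine le_antisymm ?_ zero_le
        rw [huniv]
        refine le_trans (lintegral_iUnion_le _ _) ?_
        simp [hball0]
      rw [hz, hM, mul_zero]
    · rw [ENNReal.top_mul hM]
      exact le_top

lemma conv_le_maximal (hn : 0 < n)
    (ρ : EuclideanSpace ℝ (Fin n) → ℝ) (ρ₀ : ℝ → ℝ)
    (hradial : ∀ x, ρ x = ρ₀ ‖x‖)
    (hnonneg : ∀ s : ℝ, 0 ≤ s → 0 ≤ ρ₀ s)
    (hdecr : ∀ s u : ℝ, 0 ≤ s → s ≤ u → ρ₀ u ≤ ρ₀ s)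
    (hρint : Integrable ρ) (hρ1 : ∫ x, ρ x ≤ 1)
    {τ : ℝ} (hτ : 0 < τ)
    (h : EuclideanSpace ℝ (Fin n) → ℂ)
    (hG : AEMeasurable (fun v : EuclideanSpace ℝ (Fin n) => ((‖h v‖₊ : ℝ≥0∞))) volume)
    (w : EuclideanSpace ℝ (Fin n)) :
    ∫⁻ y, ENNReal.ofReal ((τ ^ n)⁻¹ * ρ (τ⁻¹ • y)) * ((‖h (w - y)‖₊ : ℝ≥0∞)) ≤ maximalFn h w := by
  set G : EuclideanSpace ℝ (Fin n) → ℝ≥0∞ := fun v => ((‖h v‖₊ : ℝ≥0∞)) with hGdef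
  set ρt : EuclideanSpace ℝ (Fin n) → ℝ := fun y => (τ ^ n)⁻¹ * ρ (τ⁻¹ • y) with hρt
  have hρm : Measurable ρ := measurable_rho ρ ρ₀ hradial hdecr
  have hρtm : Measurable ρt :=
    (hρm.comp (measurable_const_smul τ⁻¹)).const_mul _
  have hρtnn : ∀ y, 0 ≤ ρt y := fun y =>
    mul_nonneg (by positivity) (rho_nonneg ρ ρ₀ hradial hnonneg _)
  have hGw : AEMeasurable (fun y : EuclideanSpace ℝ (Fin n) => G (w - y)) volume :=
    hG.comp_quasiMeasurePreserving
      (Measure.measurePreserving_sub_left volume w).quasiMeasurePreserving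
  -- step 1 : layer-cake representation of the weight
  have step1 : ∀ y : EuclideanSpace ℝ (Fin n), ENNReal.ofReal (ρt y) * G (w - y)
      = ∫⁻ s in Set.Ioi (0:ℝ), (Set.Iio (ρt y)).indicator (fun _ => G (w - y)) s := by
    intro y
    rw [lintegral_indicator measurableSet_Iio, setLIntegral_const,
      Measure.restrict_apply measurableSet_Iio]
    have : Set.Iio (ρt y) ∩ Set.Ioi 0 = Set.Ioo 0 (ρt y) := by
      ext s; simp [Set.mem_Ioo, and_comm]
    rw [this, Real.volume_Ioo, sub_zero, mul_comm]
  calc ∫⁻ y, ENNReal.ofReal (ρt y) * G (w - y)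
      = ∫⁻ y, ∫⁻ s in Set.Ioi (0:ℝ), (Set.Iio (ρt y)).indicator (fun _ => G (w - y)) s := by
        exact lintegral_congr step1
    _ = ∫⁻ s in Set.Ioi (0:ℝ), ∫⁻ y, (Set.Iio (ρt y)).indicator (fun _ => G (w - y)) s := by
        apply lintegral_lintegral_swap
        have heq : Function.uncurry
            (fun (y : EuclideanSpace ℝ (Fin n)) (s : ℝ) =>
              (Set.Iio (ρt y)).indicator (fun _ => G (w - y)) s)
            = {p : EuclideanSpace ℝ (Fin n) × ℝ | p.2 < ρt p.1}.indicator
              (fun p => G (w - p.1)) := by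
          ext p
          simp only [Function.uncurry, Set.indicator_apply, Set.mem_Iio, Set.mem_setOf_eq]
        rw [heq]
        refine AEMeasurable.indicator ?_ (measurableSet_lt measurable_snd
          (hρtm.comp measurable_fst))
        exact hGw.comp_quasiMeasurePreserving Measure.quasiMeasurePreserving_fst
    _ ≤ ∫⁻ s in Set.Ioi (0:ℝ), volume {y | s < ρt y} * maximalFn h w := by
        refine setLIntegral_mono' measurableSet_Ioi fun s hs => ?_
        have hind : (fun y => (Set.Iio (ρt y)).indicator
            (fun _ => G (w - y)) s) = {y | s < ρt y}.indicator (fun y => G (w - y)) := by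
          ext y
          simp only [Set.indicator_apply, Set.mem_Iio, Set.mem_setOf_eq]
        rw [hind, lintegral_indicator (measurableSet_lt measurable_const hρtm)]
        refine setLIntegral_radial_le hn h w fun y' y hle hy => ?_
        simp only [Set.mem_setOf_eq] at hy ⊢
        refine lt_of_lt_of_le hy ?_
        simp only [hρt]
        refine mul_le_mul_of_nonneg_left ?_ (by positivity)
        rw [hradial, hradial, norm_smul, norm_smul]
        refine hdecr _ _ (by positivity) ?_
        have : (0:ℝ) ≤ ‖τ⁻¹‖ := norm_nonneg _
        exact mul_le_mul_of_nonneg_left hle this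
    _ = (∫⁻ s in Set.Ioi (0:ℝ), volume {y | s < ρt y}) * maximalFn h w := by
        rw [lintegral_mul_const]
        exact Antitone.measurable fun s u hsu =>
          measure_mono fun y hy => lt_of_le_of_lt hsu hy
    _ = (∫⁻ y, ENNReal.ofReal (ρt y)) * maximalFn h w := by
        rw [lintegral_eq_lintegral_meas_lt volume
          (Filter.Eventually.of_forall hρtnn) hρtm.aemeasurable]
    _ ≤ 1 * maximalFn h w := by
        exact mul_le_mul_left
          (lintegral_rho_scaled ρ ρ₀ hradial hnonneg hρint hρ1 hτ) _
    _ = maximalFn h w := one_mul _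


set_option maxHeartbeats 1000000 in
lemma measurable_maximalFn (h : EuclideanSpace ℝ (Fin n) → ℂ)
    (hG : AEMeasurable (fun v : EuclideanSpace ℝ (Fin n) => ((‖h v‖₊ : ℝ≥0∞))) volume) :
    Measurable (maximalFn h) := by
  set G : EuclideanSpace ℝ (Fin n) → ℝ≥0∞ := fun v => ((‖h v‖₊ : ℝ≥0∞)) with hGdef
  set G' := hG.mk G with hG'def
  have hG'm : Measurable G' := hG.measurable_mk
  have hGG' : ∀ (x : EuclideanSpace ℝ (Fin n)) (r : ℝ),
      ∫⁻ y in ball x r, G y = ∫⁻ y in ball x r, G' y := fun x r =>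
    lintegral_congr_ae (ae_restrict_of_ae hG.ae_eq_mk)
  -- the integral over a ball, as a measurable function of the center
  have hint : ∀ q : ℝ, Measurable fun x => ∫⁻ y in ball x q, G' y := by
    intro q
    have hf : Measurable fun p : EuclideanSpace ℝ (Fin n) × EuclideanSpace ℝ (Fin n) =>
        ({p : EuclideanSpace ℝ (Fin n) × EuclideanSpace ℝ (Fin n) | dist p.2 p.1 < q}).indicator
          (fun p => G' p.2) p := by
      refine Measurable.indicator (hG'm.comp measurable_snd) ?_
      exact measurableSet_lt (measurable_dist.comp (measurable_snd.prodMk measurable_fst))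
        measurable_const
    have heq : (fun x => ∫⁻ y in ball x q, G' y) = fun x =>
        ∫⁻ y, ({p : EuclideanSpace ℝ (Fin n) × EuclideanSpace ℝ (Fin n) |
          dist p.2 p.1 < q}).indicator (fun p => G' p.2) (x, y) := by
      ext x
      rw [← lintegral_indicator measurableSet_ball]
      refine lintegral_congr fun y => ?_
      classical
      rw [Set.indicator_apply, Set.indicator_apply]
      simp only [mem_ball, Set.mem_setOf_eq]
    rw [heq]
    exact Measurable.lintegral_prod_right' (ν := (volume : Measure (EuclideanSpace ℝ (Fin n)))) hf
  -- reduction to a countable supremum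
  have key : ∀ x, maximalFn h x =
      ⨆ (q : ℚ) (_ : 0 < (q : ℝ)), (volume (ball x (q:ℝ)))⁻¹ * ∫⁻ y in ball x (q:ℝ), G y := by
    intro x
    apply le_antisymm
    · refine iSup₂_le fun r hr => ?_
      set ν := volume.withDensity G'
      have hν : ∀ s : ℝ, ∫⁻ y in ball x s, G y = ν (ball x s) := by
        intro s
        rw [hGG', hG'def, ← withDensity_apply _ measurableSet_ball]
      have hdir : Directed (· ⊆ ·) fun q : {q : ℚ // 0 < (q:ℝ) ∧ (q:ℝ) < r} =>
          ball x (q:ℝ) := by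
        intro q q'
        rcases le_total (q:ℚ) (q':ℚ) with hle | hle
        · exact ⟨q', ball_subset_ball (by exact_mod_cast hle), subset_rfl⟩
        · exact ⟨q, subset_rfl, ball_subset_ball (by exact_mod_cast hle)⟩
      have hcover : ball x r = ⋃ q : {q : ℚ // 0 < (q:ℝ) ∧ (q:ℝ) < r}, ball x (q:ℝ) := by
        ext y
        simp only [Set.mem_iUnion, mem_ball]
        constructor
        · intro hy
          obtain ⟨q, hq1, hq2⟩ := exists_rat_btwn (max_lt hy hr : max (dist y x) 0 < r)
          refine ⟨⟨q, lt_of_le_of_lt (le_max_right _ _) hq1, hq2⟩, ?_⟩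
          exact lt_of_le_of_lt (le_max_left _ _) hq1
        · rintro ⟨q, hy⟩
          exact hy.trans q.2.2
      have hsup : ν (ball x r) = ⨆ q : {q : ℚ // 0 < (q:ℝ) ∧ (q:ℝ) < r}, ν (ball x (q:ℝ)) := by
        rw [hcover]
        exact hdir.measure_iUnion (μ := ν)
      rw [hν, hsup, ENNReal.mul_iSup]
      refine iSup_le fun q => ?_
      refine le_iSup₂_of_le q.1 q.2.1 ?_
      rw [hν]
      exact mul_le_mul_left (ENNReal.inv_le_inv.mpr (measure_mono
        (ball_subset_ball q.2.2.le))) _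
    · exact iSup₂_le fun q hq => le_iSup₂_of_le (q:ℝ) hq le_rfl
  have : maximalFn h = fun x =>
      ⨆ (q : ℚ) (_ : 0 < (q : ℝ)), (volume (ball x (q:ℝ)))⁻¹ * ∫⁻ y in ball x (q:ℝ), G y := by
    ext x; exact key x
  rw [this]
  refine Measurable.iSup fun q => Measurable.iSup fun hq => ?_
  have hvol : ∀ x : EuclideanSpace ℝ (Fin n), volume (ball x (q:ℝ)) = volume (ball (0 : EuclideanSpace ℝ (Fin n)) (q:ℝ)) :=
    fun x => Measure.addHaar_ball_center volume x _
  have : (fun x => (volume (ball x (q:ℝ)))⁻¹ * ∫⁻ y in ball x (q:ℝ), G y)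
      = fun x => (volume (ball (0 : EuclideanSpace ℝ (Fin n)) (q:ℝ)))⁻¹ *
        ∫⁻ y in ball x (q:ℝ), G' y := by
    ext x; rw [hvol x, hGG']
  rw [this]
  exact (hint q).const_mul _


lemma qmp_sub_sub (μ : Measure (EuclideanSpace ℝ (Fin n))) [SFinite μ]
    (z : EuclideanSpace ℝ (Fin n)) :
    Measure.QuasiMeasurePreserving
      (fun p : EuclideanSpace ℝ (Fin n) × EuclideanSpace ℝ (Fin n) => z - p.1 - p.2)
      ((volume : Measure (EuclideanSpace ℝ (Fin n))).prod μ) volume := by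
  have hmeas : Measurable
      (fun p : EuclideanSpace ℝ (Fin n) × EuclideanSpace ℝ (Fin n) => z - p.1 - p.2) :=
    (measurable_const.sub measurable_fst).sub measurable_snd
  refine ⟨hmeas, Measure.AbsolutelyContinuous.mk fun N hN hN0 => ?_⟩
  rw [Measure.map_apply hmeas hN, Measure.prod_apply_symm (hmeas hN)]
  have : ∀ u : EuclideanSpace ℝ (Fin n),
      (volume : Measure (EuclideanSpace ℝ (Fin n)))
        ((fun y => (y, u)) ⁻¹' ((fun p : EuclideanSpace ℝ (Fin n) × EuclideanSpace ℝ (Fin n) =>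
          z - p.1 - p.2) ⁻¹' N)) = 0 := by
    intro u
    have hset : ((fun y => (y, u)) ⁻¹' ((fun p : EuclideanSpace ℝ (Fin n) ×
        EuclideanSpace ℝ (Fin n) => z - p.1 - p.2) ⁻¹' N))
        = (fun y => (z - u) - y) ⁻¹' N := by
      ext y
      simp only [Set.mem_preimage]
      rw [sub_right_comm]
    rw [hset, (Measure.measurePreserving_sub_left volume (z - u)).measure_preimage
      hN.nullMeasurableSet, hN0]
  simp only [this, lintegral_zero]


/-- The low-energy duality estimate: for disjoint cubes `I_k`, `c_k ≤ α|I_k|`, a finite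
measure `μ`, and nonnegative radially decreasing `ρ` with `‖ρ‖₁ ≤ 1`,
`∑_k c_k |I_k|⁻¹ ∫_{I_k} (ρ_{t_k} * μ * |h|)(z) dz ≤ α μ(ℝⁿ) (∑_k |I_k|)^{1/2} ‖Mh‖₂`. -/
theorem stmt14 {n : ℕ}
    (a : ℕ → EuclideanSpace ℝ (Fin n)) (r : ℕ → ℝ) (hr : ∀ k, 0 < r k)
    (hdisj : Pairwise (Function.onFun Disjoint (fun k => cube (a k) (r k))))
    (α : ℝ) (hα : 0 < α)
    (c : ℕ → ℝ) (hc0 : ∀ k, 0 ≤ c k)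
    (hc : ∀ k, c k ≤ α * (volume (cube (a k) (r k))).toReal)
    (μ : Measure (EuclideanSpace ℝ (Fin n))) [IsFiniteMeasure μ]
    (ρ : EuclideanSpace ℝ (Fin n) → ℝ) (ρ₀ : ℝ → ℝ)
    (hradial : ∀ x, ρ x = ρ₀ ‖x‖)
    (hnonneg : ∀ s : ℝ, 0 ≤ s → 0 ≤ ρ₀ s)
    (hdecr : ∀ s u : ℝ, 0 ≤ s → s ≤ u → ρ₀ u ≤ ρ₀ s)
    (hρint : Integrable ρ) (hρ1 : ∫ x, ρ x ≤ 1)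
    (t : ℕ → ℝ) (ht : ∀ k, 0 < t k)
    (h : EuclideanSpace ℝ (Fin n) → ℂ) (hh : MemLp h 2 (volume : Measure (EuclideanSpace ℝ (Fin n)))) :
    ∑' k : ℕ, ENNReal.ofReal (c k) * (volume (cube (a k) (r k)))⁻¹ *
        ∫⁻ z in cube (a k) (r k),
          ∫⁻ y : EuclideanSpace ℝ (Fin n),
            ENNReal.ofReal ((t k ^ n)⁻¹ * ρ ((t k)⁻¹ • y)) *
              ∫⁻ u, ((‖h (z - y - u)‖₊ : ℝ≥0∞)) ∂μ ≤
      ENNReal.ofReal α * μ Set.univ * (∑' k : ℕ, volume (cube (a k) (r k))) ^ (1/2 : ℝ) *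
        (∫⁻ x, (maximalFn h x) ^ 2) ^ (1/2 : ℝ) := by
  rcases Nat.eq_zero_or_pos n with hn0 | hn
  · exfalso
    subst hn0
    have hd := hdisj (show (0:ℕ) ≠ 1 by norm_num)
    have h0 : (0 : EuclideanSpace ℝ (Fin 0)) ∈ cube (a 0) (r 0) := fun i => i.elim0
    have h1 : (0 : EuclideanSpace ℝ (Fin 0)) ∈ cube (a 1) (r 1) := fun i => i.elim0
    exact Set.disjoint_iff.mp hd ⟨h0, h1⟩
  set G : EuclideanSpace ℝ (Fin n) → ℝ≥0∞ := fun v => ((‖h v‖₊ : ℝ≥0∞)) with hGdef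
  have hG : AEMeasurable G volume := hh.aestronglyMeasurable.enorm
  have hM : Measurable (maximalFn h) := measurable_maximalFn h hG
  set I : ℕ → Set (EuclideanSpace ℝ (Fin n)) := fun k => cube (a k) (r k) with hIdef
  have hImeas : ∀ k, MeasurableSet (I k) := fun k => measurableSet_cube _ _
  have hIne : ∀ k, volume (I k) ≠ 0 := by
    intro k
    rw [hIdef, volume_cube _ (hr k).le]
    exact pow_ne_zero n (by simp [ENNReal.ofReal_eq_zero, not_le, hr k])
  have hInt : ∀ k, volume (I k) ≠ ⊤ := by
    intro k
    rw [hIdef, volume_cube _ (hr k).le]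
    exact pow_ne_top ENNReal.ofReal_ne_top
  have hρm : Measurable ρ := measurable_rho ρ ρ₀ hradial hdecr
  -- Step 1: pointwise bound by the maximal function
  have hzb : ∀ (k : ℕ) (z : EuclideanSpace ℝ (Fin n)),
      (∫⁻ y : EuclideanSpace ℝ (Fin n),
        ENNReal.ofReal ((t k ^ n)⁻¹ * ρ ((t k)⁻¹ • y)) *
          ∫⁻ u, G (z - y - u) ∂μ) ≤ ∫⁻ u, maximalFn h (z - u) ∂μ := by
    intro k z
    have hswap : AEMeasurable (Function.uncurry fun (y u : EuclideanSpace ℝ (Fin n)) =>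
        ENNReal.ofReal ((t k ^ n)⁻¹ * ρ ((t k)⁻¹ • y)) * G (z - y - u))
        ((volume : Measure (EuclideanSpace ℝ (Fin n))).prod μ) := by
      show AEMeasurable (fun p : EuclideanSpace ℝ (Fin n) × EuclideanSpace ℝ (Fin n) =>
        ENNReal.ofReal ((t k ^ n)⁻¹ * ρ ((t k)⁻¹ • p.1)) * G (z - p.1 - p.2)) _
      refine AEMeasurable.fun_mul ?_ ?_
      · exact (((hρm.comp (measurable_const_smul (t k)⁻¹)).const_mul _).ennreal_ofReal.comp
          measurable_fst).aemeasurable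
      · exact hG.comp_quasiMeasurePreserving (qmp_sub_sub μ z)
    calc ∫⁻ y : EuclideanSpace ℝ (Fin n),
          ENNReal.ofReal ((t k ^ n)⁻¹ * ρ ((t k)⁻¹ • y)) * ∫⁻ u, G (z - y - u) ∂μ
        = ∫⁻ y : EuclideanSpace ℝ (Fin n), ∫⁻ u,
            ENNReal.ofReal ((t k ^ n)⁻¹ * ρ ((t k)⁻¹ • y)) * G (z - y - u) ∂μ :=
          lintegral_congr fun y => (lintegral_const_mul' _ _ ENNReal.ofReal_ne_top).symm
      _ = ∫⁻ u, (∫⁻ y : EuclideanSpace ℝ (Fin n),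
            ENNReal.ofReal ((t k ^ n)⁻¹ * ρ ((t k)⁻¹ • y)) * G (z - y - u)) ∂μ :=
          lintegral_lintegral_swap hswap
      _ ≤ ∫⁻ u, maximalFn h (z - u) ∂μ := by
          refine lintegral_mono fun u => ?_
          have heq : ∀ y : EuclideanSpace ℝ (Fin n), z - y - u = (z - u) - y :=
            fun y => sub_right_comm z y u
          calc ∫⁻ y : EuclideanSpace ℝ (Fin n),
                ENNReal.ofReal ((t k ^ n)⁻¹ * ρ ((t k)⁻¹ • y)) * G (z - y - u)
              = ∫⁻ y : EuclideanSpace ℝ (Fin n),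
                  ENNReal.ofReal ((t k ^ n)⁻¹ * ρ ((t k)⁻¹ • y)) * G ((z - u) - y) := by
                refine lintegral_congr fun y => ?_
                rw [heq y]
            _ ≤ maximalFn h (z - u) :=
                conv_le_maximal hn ρ ρ₀ hradial hnonneg hdecr hρint hρ1 (ht k) h hG (z - u)
  -- coefficient bound
  have hcoef : ∀ k, ENNReal.ofReal (c k) * (volume (I k))⁻¹ ≤ ENNReal.ofReal α := by
    intro k
    have h1 : ENNReal.ofReal (c k) ≤ ENNReal.ofReal α * volume (I k) := by
      refine le_trans (ENNReal.ofReal_le_ofReal (hc k)) ?_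
      rw [ENNReal.ofReal_mul hα.le, ENNReal.ofReal_toReal (hInt k)]
    calc ENNReal.ofReal (c k) * (volume (I k))⁻¹
        ≤ (ENNReal.ofReal α * volume (I k)) * (volume (I k))⁻¹ := mul_le_mul_left h1 _
      _ = ENNReal.ofReal α * (volume (I k) * (volume (I k))⁻¹) := mul_assoc _ _ _
      _ = ENNReal.ofReal α := by rw [ENNReal.mul_inv_cancel (hIne k) (hInt k), mul_one]
  -- measurability of the u-integrand
  have hFmeas : ∀ k, Measurable fun u => ∫⁻ z in I k, maximalFn h (z - u) := by
    intro k
    have hf : Measurable fun p : EuclideanSpace ℝ (Fin n) × EuclideanSpace ℝ (Fin n) =>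
        ({p : EuclideanSpace ℝ (Fin n) × EuclideanSpace ℝ (Fin n) | p.2 ∈ I k}).indicator
          (fun p => maximalFn h (p.2 - p.1)) p := by
      refine Measurable.indicator (hM.comp (measurable_snd.sub measurable_fst)) ?_
      exact measurable_snd (hImeas k)
    have heq : (fun u => ∫⁻ z in I k, maximalFn h (z - u)) = fun u =>
        ∫⁻ z, ({p : EuclideanSpace ℝ (Fin n) × EuclideanSpace ℝ (Fin n) | p.2 ∈ I k}).indicator
          (fun p => maximalFn h (p.2 - p.1)) (u, z) := by
      ext u
      rw [← lintegral_indicator (hImeas k)]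
      refine lintegral_congr fun z => ?_
      classical
      rw [Set.indicator_apply, Set.indicator_apply]
      simp only [Set.mem_setOf_eq]
    rw [heq]
    exact Measurable.lintegral_prod_right'
      (ν := (volume : Measure (EuclideanSpace ℝ (Fin n)))) hf
  -- per-k key bound
  have key : ∀ k, ENNReal.ofReal (c k) * (volume (I k))⁻¹ *
      (∫⁻ z in I k, ∫⁻ y : EuclideanSpace ℝ (Fin n),
        ENNReal.ofReal ((t k ^ n)⁻¹ * ρ ((t k)⁻¹ • y)) * ∫⁻ u, G (z - y - u) ∂μ)
      ≤ ENNReal.ofReal α * ∫⁻ u, (∫⁻ z in I k, maximalFn h (z - u)) ∂μ := by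
    intro k
    have hswap2 : ∫⁻ z in I k, (∫⁻ u, maximalFn h (z - u) ∂μ)
        = ∫⁻ u, (∫⁻ z in I k, maximalFn h (z - u)) ∂μ := by
      refine lintegral_lintegral_swap ?_
      exact (hM.comp (measurable_fst.sub measurable_snd)).aemeasurable
    calc ENNReal.ofReal (c k) * (volume (I k))⁻¹ *
        (∫⁻ z in I k, ∫⁻ y : EuclideanSpace ℝ (Fin n),
          ENNReal.ofReal ((t k ^ n)⁻¹ * ρ ((t k)⁻¹ • y)) * ∫⁻ u, G (z - y - u) ∂μ)
        ≤ ENNReal.ofReal (c k) * (volume (I k))⁻¹ *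
          (∫⁻ z in I k, ∫⁻ u, maximalFn h (z - u) ∂μ) :=
          mul_le_mul_right (lintegral_mono fun z => hzb k z) _
      _ ≤ ENNReal.ofReal α * (∫⁻ z in I k, ∫⁻ u, maximalFn h (z - u) ∂μ) :=
          mul_le_mul_left (hcoef k) _
      _ = ENNReal.ofReal α * ∫⁻ u, (∫⁻ z in I k, maximalFn h (z - u)) ∂μ := by rw [hswap2]
  -- Cauchy-Schwarz bound, pointwise in u
  have hconj : Real.HolderConjugate 2 2 := ⟨by norm_num, by norm_num, by norm_num⟩
  set U : Set (EuclideanSpace ℝ (Fin n)) := ⋃ k, I k with hUdef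
  have hUmeas : MeasurableSet U := MeasurableSet.iUnion hImeas
  have hCS : ∀ u : EuclideanSpace ℝ (Fin n),
      (∫⁻ z in U, maximalFn h (z - u)) ≤
      (∑' k : ℕ, volume (I k)) ^ (1/2 : ℝ) *
        (∫⁻ x, (maximalFn h x) ^ 2) ^ (1/2 : ℝ) := by
    intro u
    have hind : (∫⁻ z in U, maximalFn h (z - u)) =
        ∫⁻ z, (U.indicator (fun _ => (1 : ℝ≥0∞)) z) * maximalFn h (z - u) := by
      rw [← lintegral_indicator hUmeas]
      refine lintegral_congr fun z => ?_
      classical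
      rw [Set.indicator_apply, Set.indicator_apply]
      by_cases hz : z ∈ U <;> simp [hz]
    rw [hind]
    have hMz : Measurable fun z : EuclideanSpace ℝ (Fin n) => maximalFn h (z - u) :=
      hM.comp (measurable_id.sub measurable_const)
    refine le_trans (ENNReal.lintegral_mul_le_Lp_mul_Lq volume hconj
      ((measurable_one.indicator hUmeas).aemeasurable) hMz.aemeasurable) ?_
    have e1 : ∫⁻ z, (U.indicator (fun _ => (1 : ℝ≥0∞)) z) ^ (2:ℝ) = ∑' k : ℕ, volume (I k) := by
      have : ∀ z, (U.indicator (fun _ => (1 : ℝ≥0∞)) z) ^ (2:ℝ)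
          = U.indicator (fun _ => (1 : ℝ≥0∞)) z := by
        intro z
        classical
        rw [Set.indicator_apply]
        by_cases hz : z ∈ U <;> simp [hz, ENNReal.zero_rpow_of_pos (by norm_num : (0:ℝ) < 2)]
      rw [lintegral_congr this, lintegral_indicator hUmeas, setLIntegral_const, one_mul]
      exact measure_iUnion hdisj hImeas
    have e2 : ∫⁻ z, (maximalFn h (z - u)) ^ (2:ℝ) = ∫⁻ x, (maximalFn h x) ^ 2 := by
      have hmp : MeasurePreserving (fun z : EuclideanSpace ℝ (Fin n) => z - u) volume volume :=
        measurePreserving_sub_right (volume : Measure (EuclideanSpace ℝ (Fin n))) u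
      rw [hmp.lintegral_comp (hM.pow measurable_const)]
      refine lintegral_congr fun x => ?_
      rw [← ENNReal.rpow_natCast (maximalFn h x) 2]
      norm_num
    rw [e1, e2]
  -- assemble
  calc ∑' k : ℕ, ENNReal.ofReal (c k) * (volume (I k))⁻¹ *
        ∫⁻ z in I k, ∫⁻ y : EuclideanSpace ℝ (Fin n),
          ENNReal.ofReal ((t k ^ n)⁻¹ * ρ ((t k)⁻¹ • y)) * ∫⁻ u, G (z - y - u) ∂μ
      ≤ ∑' k : ℕ, ENNReal.ofReal α * ∫⁻ u, (∫⁻ z in I k, maximalFn h (z - u)) ∂μ :=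
        ENNReal.tsum_le_tsum key
    _ = ENNReal.ofReal α * ∑' k : ℕ, ∫⁻ u, (∫⁻ z in I k, maximalFn h (z - u)) ∂μ :=
        ENNReal.tsum_mul_left
    _ = ENNReal.ofReal α * ∫⁻ u, (∑' k : ℕ, ∫⁻ z in I k, maximalFn h (z - u)) ∂μ := by
        rw [lintegral_tsum fun k => (hFmeas k).aemeasurable]
    _ = ENNReal.ofReal α * ∫⁻ u, (∫⁻ z in U, maximalFn h (z - u)) ∂μ := by
        congr 1
        refine lintegral_congr fun u => ?_
        rw [hUdef, lintegral_iUnion hImeas hdisj]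
    _ ≤ ENNReal.ofReal α * ∫⁻ _u, ((∑' k : ℕ, volume (I k)) ^ (1/2 : ℝ) *
          (∫⁻ x, (maximalFn h x) ^ 2) ^ (1/2 : ℝ)) ∂μ :=
        mul_le_mul_right (lintegral_mono fun u => hCS u) _
    _ = ENNReal.ofReal α * μ Set.univ * (∑' k : ℕ, volume (I k)) ^ (1/2 : ℝ) *
          (∫⁻ x, (maximalFn h x) ^ 2) ^ (1/2 : ℝ) := by
        rw [lintegral_const]
        ring
end radial
end
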